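/- Let U ⊆ ℝ² be open and connected, and let q, r, q̃, r̃ : U → ℝ be continuously differentiable and nowhere zero, with q + q̃ and r + r̃ also nowhere zero. Suppose that at every point of U the logarithmic gradients agree: (q̃ r̃)_v/(q̃ r̃) = (q r)_v/(q r), (q̃ r̃)_w/(q̃ r̃) = (q r)_w/(q r), ((q+q̃)(r+r̃))_v/((q+q̃)(r+r̃)) = (q r)_v/(q r), and ((q+q̃)(r+r̃))_w/((q+q̃)(r+r̃)) = (q r)_w/(q r). Then there exist constants λ, μ ∈ ℝ such that q̃ = λ q and r̃ = μ r on U. -/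

import Mathlib

/-- Partial derivative of `f : ℝⁿ → ℝ` in the `i`-th coordinate direction. -/
noncomputable def pd {n : ℕ} (i : Fin n) (f : (Fin n → ℝ) → ℝ) (x : Fin n → ℝ) : ℝ :=
  fderiv ℝ f x (Pi.single i 1)

/-- A continuous linear map on ℝ² vanishing on the two basis vectors is zero. -/
lemma clm_zero_of_basis (L : (Fin 2 → ℝ) →L[ℝ] ℝ)
    (h0 : L (Pi.single 0 1) = 0) (h1 : L (Pi.single 1 1) = 0) : L = 0 := by
  ext v
  have hv : v = v 0 • (Pi.single 0 1 : Fin 2 → ℝ) + v 1 • (Pi.single 1 1 : Fin 2 → ℝ) := by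
    funext j
    fin_cases j <;> simp [Pi.single_apply]
  rw [show L v = L (v 0 • (Pi.single 0 1 : Fin 2 → ℝ) + v 1 • (Pi.single 1 1 : Fin 2 → ℝ)) by
    rw [← hv]]
  simp [h0, h1]

/-- Quotient of two functions with equal logarithmic gradients has zero derivative. -/
lemma fderiv_ratio_zero {f g : (Fin 2 → ℝ) → ℝ} {x : Fin 2 → ℝ}
    (hf : DifferentiableAt ℝ f x) (hg : DifferentiableAt ℝ g x)
    (hf0 : f x ≠ 0) (hg0 : g x ≠ 0)
    (h0 : pd 0 f x / f x = pd 0 g x / g x)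
    (h1 : pd 1 f x / f x = pd 1 g x / g x) :
    HasFDerivAt (fun y => f y / g y) (0 : (Fin 2 → ℝ) →L[ℝ] ℝ) x := by
  have hinv := (hasDerivAt_inv hg0).comp_hasFDerivAt x hg.hasFDerivAt
  have hmul : HasFDerivAt (fun y => f y * (g y)⁻¹)
      (f x • ((-(g x ^ 2)⁻¹) • fderiv ℝ g x) + (g x)⁻¹ • fderiv ℝ f x) x :=
    hf.hasFDerivAt.mul hinv
  have key : (f x • ((-(g x ^ 2)⁻¹) • fderiv ℝ g x) + (g x)⁻¹ • fderiv ℝ f x) = 0 := by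
    apply clm_zero_of_basis
    · have e0 : pd 0 f x * g x = pd 0 g x * f x := (div_eq_div_iff hf0 hg0).1 h0
      simp only [ContinuousLinearMap.add_apply, ContinuousLinearMap.smul_apply, smul_eq_mul]
      show f x * (-(g x ^ 2)⁻¹ * pd 0 g x) + (g x)⁻¹ * pd 0 f x = 0
      field_simp
      linear_combination e0
    · have e1 : pd 1 f x * g x = pd 1 g x * f x := (div_eq_div_iff hf0 hg0).1 h1
      simp only [ContinuousLinearMap.add_apply, ContinuousLinearMap.smul_apply, smul_eq_mul]
      show f x * (-(g x ^ 2)⁻¹ * pd 1 g x) + (g x)⁻¹ * pd 1 f x = 0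
      field_simp
      linear_combination e1
  have h2 : HasFDerivAt (fun y => f y * (g y)⁻¹) (0 : (Fin 2 → ℝ) →L[ℝ] ℝ) x := key ▸ hmul
  simpa only [div_eq_mul_inv] using h2

/-- A function with zero derivative on an open preconnected set is constant there. -/
lemma const_of_fderiv_zero {U : Set (Fin 2 → ℝ)} (hUo : IsOpen U) (hUc : IsPreconnected U)
    {g : (Fin 2 → ℝ) → ℝ} (hg : ∀ x ∈ U, DifferentiableAt ℝ g x)
    (hg' : ∀ x ∈ U, fderiv ℝ g x = 0) {x y : Fin 2 → ℝ} (hx : x ∈ U) (hy : y ∈ U) :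
    g x = g y := by
  have key : ∀ z ∈ U, ∃ ε > 0, Metric.ball z ε ⊆ U ∧ ∀ w ∈ Metric.ball z ε, g w = g z := by
    intro z hz
    obtain ⟨ε, hε, hball⟩ := Metric.isOpen_iff.1 hUo z hz
    refine ⟨ε, hε, hball, fun w hw => ?_⟩
    refine (convex_ball z ε).is_const_of_fderivWithin_eq_zero
      (fun p hp => (hg p (hball hp)).differentiableWithinAt) (fun p hp => ?_) hw
      (Metric.mem_ball_self hε)
    rw [fderivWithin_of_isOpen Metric.isOpen_ball hp]
    exact hg' p (hball hp)
  by_contra hne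
  have hopen1 : IsOpen {z | z ∈ U ∧ g z = g x} := by
    rw [Metric.isOpen_iff]
    rintro z ⟨hz, hgz⟩
    obtain ⟨ε, hε, hsub, hconst⟩ := key z hz
    exact ⟨ε, hε, fun w hw => ⟨hsub hw, (hconst w hw).trans hgz⟩⟩
  have hopen2 : IsOpen {z | z ∈ U ∧ g z ≠ g x} := by
    rw [Metric.isOpen_iff]
    rintro z ⟨hz, hgz⟩
    obtain ⟨ε, hε, hsub, hconst⟩ := key z hz
    exact ⟨ε, hε, fun w hw => ⟨hsub hw, (hconst w hw).symm ▸ hgz⟩⟩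
  obtain ⟨z, _, ⟨_, hz1⟩, _, hz2⟩ := hUc _ _ hopen1 hopen2
    (fun z hz => by by_cases h : g z = g x <;> [exact Or.inl ⟨hz, h⟩; exact Or.inr ⟨hz, h⟩])
    ⟨x, hx, hx, rfl⟩ ⟨y, hy, hy, fun h => hne h.symm⟩
  exact hz2 hz1

/-- A continuous two-valued function on a preconnected set is constant. -/
lemma const_of_two_valued {U : Set (Fin 2 → ℝ)} (hUc : IsPreconnected U)
    {u : (Fin 2 → ℝ) → ℝ} (hu : ContinuousOn u U) {a b : ℝ}
    (hv : ∀ x ∈ U, u x = a ∨ u x = b) {x y : Fin 2 → ℝ} (hx : x ∈ U) (hy : y ∈ U) :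
    u x = u y := by
  have main : ∀ p ∈ U, ∀ p' ∈ U, u p < u p' → False := by
    intro p hp p' hp' hlt
    have hmid : (u p + u p') / 2 ∈ Set.Icc (u p) (u p') := ⟨by linarith, by linarith⟩
    obtain ⟨z, hz, hz'⟩ := hUc.intermediate_value hp hp' hu hmid
    rcases hv p hp with h1 | h1 <;> rcases hv p' hp' with h2 | h2 <;>
      rcases hv z hz with h3 | h3 <;> linarith
  rcases lt_trichotomy (u x) (u y) with h | h | h
  · exact absurd h (fun h => main x hx y hy h)
  · exact h
  · exact absurd h (fun h => main y hy x hx h)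

/-- Coordinates on ℝ² are `(v,w)` with indices `(0,1)`.  If `q, r, q̃, r̃` are C¹ and
nowhere zero on an open connected set `U`, with `q+q̃` and `r+r̃` also nowhere zero, and
the logarithmic gradients of `q̃r̃`, `qr` and `(q+q̃)(r+r̃)` all agree on `U`, then
`q̃ = λq` and `r̃ = μr` on `U` for some constants `λ, μ`. -/
theorem stmt17 (U : Set (Fin 2 → ℝ)) (hUo : IsOpen U) (hUc : IsConnected U)
    (q r qt rt : (Fin 2 → ℝ) → ℝ)
    (hq : ContDiffOn ℝ 1 q U) (hr : ContDiffOn ℝ 1 r U)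
    (hqt : ContDiffOn ℝ 1 qt U) (hrt : ContDiffOn ℝ 1 rt U)
    (hq0 : ∀ x ∈ U, q x ≠ 0) (hr0 : ∀ x ∈ U, r x ≠ 0)
    (hqt0 : ∀ x ∈ U, qt x ≠ 0) (hrt0 : ∀ x ∈ U, rt x ≠ 0)
    (hsumq0 : ∀ x ∈ U, q x + qt x ≠ 0) (hsumr0 : ∀ x ∈ U, r x + rt x ≠ 0)
    (h1v : ∀ x ∈ U, pd 0 (fun y => qt y * rt y) x / (qt x * rt x) =
        pd 0 (fun y => q y * r y) x / (q x * r x))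
    (h1w : ∀ x ∈ U, pd 1 (fun y => qt y * rt y) x / (qt x * rt x) =
        pd 1 (fun y => q y * r y) x / (q x * r x))
    (h2v : ∀ x ∈ U, pd 0 (fun y => (q y + qt y) * (r y + rt y)) x /
          ((q x + qt x) * (r x + rt x)) =
        pd 0 (fun y => q y * r y) x / (q x * r x))
    (h2w : ∀ x ∈ U, pd 1 (fun y => (q y + qt y) * (r y + rt y)) x /
          ((q x + qt x) * (r x + rt x)) =
        pd 1 (fun y => q y * r y) x / (q x * r x)) :
    ∃ lam mu : ℝ, ∀ x ∈ U, qt x = lam * q x ∧ rt x = mu * r x := by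
  obtain ⟨x₀, hx₀⟩ := hUc.nonempty
  have hUp : IsPreconnected U := hUc.isPreconnected
  -- differentiability of everything
  have hdq : ∀ x ∈ U, DifferentiableAt ℝ q x := fun x hx =>
    ((hq.differentiableOn one_ne_zero) x hx).differentiableAt (hUo.mem_nhds hx)
  have hdr : ∀ x ∈ U, DifferentiableAt ℝ r x := fun x hx =>
    ((hr.differentiableOn one_ne_zero) x hx).differentiableAt (hUo.mem_nhds hx)
  have hdqt : ∀ x ∈ U, DifferentiableAt ℝ qt x := fun x hx =>
    ((hqt.differentiableOn one_ne_zero) x hx).differentiableAt (hUo.mem_nhds hx)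
  have hdrt : ∀ x ∈ U, DifferentiableAt ℝ rt x := fun x hx =>
    ((hrt.differentiableOn one_ne_zero) x hx).differentiableAt (hUo.mem_nhds hx)
  have hdP : ∀ x ∈ U, DifferentiableAt ℝ (fun y => q y * r y) x := fun x hx =>
    (hdq x hx).mul (hdr x hx)
  have hdPt : ∀ x ∈ U, DifferentiableAt ℝ (fun y => qt y * rt y) x := fun x hx =>
    (hdqt x hx).mul (hdrt x hx)
  have hdS : ∀ x ∈ U, DifferentiableAt ℝ (fun y => (q y + qt y) * (r y + rt y)) x := fun x hx =>
    ((hdq x hx).add (hdqt x hx)).mul ((hdr x hx).add (hdrt x hx))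
  have hP0 : ∀ x ∈ U, q x * r x ≠ 0 := fun x hx => mul_ne_zero (hq0 x hx) (hr0 x hx)
  have hPt0 : ∀ x ∈ U, qt x * rt x ≠ 0 := fun x hx => mul_ne_zero (hqt0 x hx) (hrt0 x hx)
  have hS0 : ∀ x ∈ U, (q x + qt x) * (r x + rt x) ≠ 0 := fun x hx =>
    mul_ne_zero (hsumq0 x hx) (hsumr0 x hx)
  -- the ratio (qt*rt)/(q*r) is constant
  have hH1 : ∀ x ∈ U, HasFDerivAt (fun y => (qt y * rt y) / (q y * r y)) (0 : (Fin 2 → ℝ) →L[ℝ] ℝ) x := fun x hx =>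
    fderiv_ratio_zero (hdPt x hx) (hdP x hx) (hPt0 x hx) (hP0 x hx) (h1v x hx) (h1w x hx)
  have hG1 : ∀ x ∈ U, fderiv ℝ (fun y => (qt y * rt y) / (q y * r y)) x = 0 := fun x hx =>
    (hH1 x hx).fderiv
  have hdiv1 : ∀ x ∈ U, DifferentiableAt ℝ (fun y => (qt y * rt y) / (q y * r y)) x :=
    fun x hx => (hH1 x hx).differentiableAt
  obtain ⟨c, hc⟩ : ∃ c : ℝ, ∀ x ∈ U, qt x * rt x = c * (q x * r x) := by
    refine ⟨(qt x₀ * rt x₀) / (q x₀ * r x₀), fun x hx => ?_⟩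
    have h := const_of_fderiv_zero hUo hUp hdiv1 hG1 hx hx₀
    rw [div_eq_iff (hP0 x hx)] at h
    exact h
  have hH2 : ∀ x ∈ U,
      HasFDerivAt (fun y => ((q y + qt y) * (r y + rt y)) / (q y * r y))
        (0 : (Fin 2 → ℝ) →L[ℝ] ℝ) x := fun x hx =>
    fderiv_ratio_zero (hdS x hx) (hdP x hx) (hS0 x hx) (hP0 x hx) (h2v x hx) (h2w x hx)
  have hG2 : ∀ x ∈ U,
      fderiv ℝ (fun y => ((q y + qt y) * (r y + rt y)) / (q y * r y)) x = 0 := fun x hx =>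
    (hH2 x hx).fderiv
  have hdiv2 : ∀ x ∈ U,
      DifferentiableAt ℝ (fun y => ((q y + qt y) * (r y + rt y)) / (q y * r y)) x :=
    fun x hx => (hH2 x hx).differentiableAt
  obtain ⟨c', hc'⟩ : ∃ c' : ℝ, ∀ x ∈ U, (q x + qt x) * (r x + rt x) = c' * (q x * r x) := by
    refine ⟨((q x₀ + qt x₀) * (r x₀ + rt x₀)) / (q x₀ * r x₀), fun x hx => ?_⟩
    have h := const_of_fderiv_zero hUo hUp hdiv2 hG2 hx hx₀
    rw [div_eq_iff (hP0 x hx)] at h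
    exact h
  obtain ⟨k, hk⟩ : ∃ k : ℝ, ∀ x ∈ U, q x * rt x + qt x * r x = k * (q x * r x) := by
    refine ⟨c' - 1 - c, fun x hx => ?_⟩
    have e : q x * rt x + qt x * r x =
        (q x + qt x) * (r x + rt x) - q x * r x - qt x * rt x := by ring
    rw [e, hc' x hx, hc x hx]; ring
  have hsum : ∀ x ∈ U, qt x / q x + rt x / r x = k := by
    intro x hx
    field_simp [hq0 x hx, hr0 x hx]
    linear_combination hk x hx
  have hut : ∀ x ∈ U, (qt x / q x) * (rt x / r x) = c := by
    intro x hx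
    field_simp [hq0 x hx, hr0 x hx]
    linear_combination hc x hx
  have hu_eq : ∀ x ∈ U, (qt x / q x) ^ 2 - k * (qt x / q x) + c = 0 := by
    intro x hx
    rw [← hsum x hx, ← hut x hx]; ring
  have hdisc0 : 0 ≤ k ^ 2 - 4 * c := by
    nlinarith [hu_eq x₀ hx₀, sq_nonneg (2 * (qt x₀ / q x₀) - k)]
  obtain ⟨s, hs⟩ : ∃ s : ℝ, s ^ 2 = k ^ 2 - 4 * c :=
    ⟨Real.sqrt (k ^ 2 - 4 * c), Real.sq_sqrt hdisc0⟩
  have hval : ∀ x ∈ U, qt x / q x = (k + s) / 2 ∨ qt x / q x = (k - s) / 2 := by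
    intro x hx
    have hA : (2 * (qt x / q x) - k) ^ 2 = k ^ 2 - 4 * c := by
      linear_combination (4 : ℝ) * hu_eq x hx
    have hfac : (2 * (qt x / q x) - k - s) * (2 * (qt x / q x) - k + s) = 0 := by
      linear_combination hA - hs
    rcases mul_eq_zero.1 hfac with h' | h'
    · left; linarith
    · right; linarith
  have hu_cont : ContinuousOn (fun x => qt x / q x) U :=
    (hqt.continuousOn).div (hq.continuousOn) hq0
  have hu_const : ∀ x ∈ U, qt x / q x = qt x₀ / q x₀ := fun x hx =>
    const_of_two_valued hUp hu_cont hval hx hx₀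
  refine ⟨qt x₀ / q x₀, k - qt x₀ / q x₀, fun x hx => ?_⟩
  have hu := hu_const x hx
  constructor
  · rw [← hu]
    exact (div_mul_cancel₀ (qt x) (hq0 x hx)).symm
  · have hrr : rt x / r x = k - qt x₀ / q x₀ := by
      have h := hsum x hx
      rw [hu] at h
      linarith
    rw [← hrr]
    exact (div_mul_cancel₀ (rt x) (hr0 x hx)).symm
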